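/- Let X be a T₅ (hereditarily normal, T₁) topological space and f : X → ℝ a function such that for every ε > 0 the restriction of f to D_f^ε = {x : ω_f(x) ≥ ε} is continuous. Then for every ε > 0 there exists a function g : X → ℝ such that sup_{x∈X} |f(x) − g(x)| ≤ ε and g is B₁**, i.e., the restriction of g to its set of discontinuity points is continuous. -/

import Mathlib

open Topology ENNReal Filter Set

/-- Oscillation of `f` at `x`: inf over neighbourhoods `O ∋ x` of `sup_{ξ∈O} ρ(f x, f ξ)`. -/
noncomputable def oscAt {X Y : Type*} [TopologicalSpace X] [PseudoMetricSpace Y]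
    (f : X → Y) (x : X) : ℝ≥0∞ :=
  ⨅ O ∈ 𝓝 x, ⨆ ξ ∈ O, edist (f x) (f ξ)

/-- Oscillation at `x` of the restriction of `f` to `D` (computed in the subspace `D`). -/
noncomputable def oscWithinAt {X Y : Type*} [TopologicalSpace X] [PseudoMetricSpace Y]
    (f : X → Y) (D : Set X) (x : X) : ℝ≥0∞ :=
  ⨅ O ∈ 𝓝[D] x, ⨆ ξ ∈ O, edist (f x) (f ξ)

/-- `DEps f ε = {x : ω_f(x) ≥ ε}`. -/
noncomputable def DEps {X : Type*} [TopologicalSpace X] (f : X → ℝ) (ε : ℝ) : Set X :=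
  {x | ENNReal.ofReal ε ≤ oscAt f x}

/-- Iterated ε-oscillation sets: `DIter f ε n = D_f^{n*ε}` (with `DIter f ε 0 = X`). -/
noncomputable def DIter {X : Type*} [TopologicalSpace X] (f : X → ℝ) (ε : ℝ) : ℕ → Set X
  | 0 => Set.univ
  | n + 1 => {x ∈ DIter f ε n | ENNReal.ofReal ε ≤ oscWithinAt f (DIter f ε n) x}

/-- The class `u𝒮_n(X)`. -/
def uS {X : Type*} [TopologicalSpace X] (n : ℕ) (f : X → ℝ) : Prop :=
  ∀ ε : ℝ, 0 < ε → DIter f ε (n + 1) = ∅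

/-- Iterated closed discontinuity sets `D_f^{n*0}` (with `DIter0 f 0 = X`). -/
def DIter0 {X : Type*} [TopologicalSpace X] (f : X → ℝ) : ℕ → Set X
  | 0 => Set.univ
  | n + 1 => closure {x ∈ DIter0 f n | ¬ ContinuousWithinAt f (DIter0 f n) x}

/-- The class `𝒮_n(X)`. -/
def SClass {X : Type*} [TopologicalSpace X] (n : ℕ) (f : X → ℝ) : Prop :=
  DIter0 f (n + 1) = ∅

/-- `f` is `B₁**` : the restriction of `f` to its set of discontinuity points is continuous. -/
def B1ss {X Y : Type*} [TopologicalSpace X] [PseudoMetricSpace Y] (f : X → Y) : Prop :=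
  ∀ x ∈ {x | ¬ ContinuousAt f x}, ContinuousWithinAt f {x | ¬ ContinuousAt f x} x


lemma isOpen_oscillation_lt {X : Type*} [TopologicalSpace X] (f : X → ℝ) (c : ℝ≥0∞) :
    IsOpen {x | oscillation f x < c} := by
  rw [isOpen_iff_forall_mem_open]
  intro x hx
  have hx' : ⨅ S ∈ (𝓝 x).map f, EMetric.diam S < c := hx
  rw [iInf_lt_iff] at hx'
  obtain ⟨S, hS⟩ := hx'
  rw [iInf_lt_iff] at hS
  obtain ⟨hSmem, hdiam⟩ := hS
  refine ⟨interior (f ⁻¹' S), ?_, isOpen_interior, ?_⟩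
  · intro y hy
    have hmem : f '' interior (f ⁻¹' S) ∈ (𝓝 y).map f := by
      rw [Filter.mem_map]
      exact Filter.mem_of_superset (isOpen_interior.mem_nhds hy)
        (Set.subset_preimage_image _ _)
    have h1 : oscillation f y ≤ EMetric.diam (f '' interior (f ⁻¹' S)) :=
      iInf₂_le _ hmem
    have h2 : EMetric.diam (f '' interior (f ⁻¹' S)) ≤ EMetric.diam S := by
      apply EMetric.diam_mono
      rintro _ ⟨z, hz, rfl⟩
      have hz' : z ∈ f ⁻¹' S := interior_subset (s := f ⁻¹' S) hz
      exact hz'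
    exact lt_of_le_of_lt (le_trans h1 h2) hdiam
  · rw [mem_interior_iff_mem_nhds]
    exact hSmem

lemma half_le_oscAt {X : Type*} [TopologicalSpace X] (f : X → ℝ) (x : X) (ε : ℝ)
    (h : ENNReal.ofReal ε ≤ oscillation f x) : ENNReal.ofReal (ε / 2) ≤ oscAt f x := by
  rcases le_or_gt ε 0 with hε | hε
  · simp [ENNReal.ofReal_eq_zero.2 (by linarith : ε / 2 ≤ 0)]
  show ENNReal.ofReal (ε / 2) ≤ ⨅ O ∈ 𝓝 x, ⨆ ξ ∈ O, edist (f x) (f ξ)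
  refine le_iInf₂ fun O hO => ?_
  have hosc : ENNReal.ofReal ε ≤ EMetric.diam (f '' O) := by
    refine le_trans h (iInf₂_le _ ?_)
    rw [Filter.mem_map]
    exact Filter.mem_of_superset hO (Set.subset_preimage_image f O)
  set sup := ⨆ ξ ∈ O, edist (f x) (f ξ) with hsup
  have hdiam : EMetric.diam (f '' O) ≤ 2 * sup := by
    apply EMetric.diam_le
    rintro _ ⟨y, hy, rfl⟩ _ ⟨z, hz, rfl⟩
    have hy' : edist (f x) (f y) ≤ sup := le_iSup₂ (f := fun ξ _ => edist (f x) (f ξ)) y hy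
    have hz' : edist (f x) (f z) ≤ sup := le_iSup₂ (f := fun ξ _ => edist (f x) (f ξ)) z hz
    calc edist (f y) (f z) ≤ edist (f y) (f x) + edist (f x) (f z) := edist_triangle _ _ _
    _ = edist (f x) (f y) + edist (f x) (f z) := by rw [edist_comm (f y) (f x)]
    _ ≤ sup + sup := add_le_add hy' hz'
    _ = 2 * sup := (two_mul _).symm
  have h2 : ENNReal.ofReal ε ≤ 2 * sup := le_trans hosc hdiam
  by_contra hlt
  push_neg at hlt
  have h3 : 2 * sup < 2 * ENNReal.ofReal (ε / 2) :=
    ENNReal.mul_lt_mul_right (by norm_num) (by norm_num) hlt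
  have h4 : 2 * ENNReal.ofReal (ε / 2) = ENNReal.ofReal ε := by
    rw [two_mul, ← ENNReal.ofReal_add (by linarith) (by linarith)]
    norm_num
  rw [h4] at h3
  exact absurd h2 (not_le.2 h3)

lemma key_approx {Z : Type*} [TopologicalSpace Z] [NormalSpace Z]
    (F : Z → ℝ) (δ : ℝ) (hδ : 0 < δ)
    (hosc : ∀ x : Z, ∃ O ∈ 𝓝 x, ∀ y ∈ O, ∀ z ∈ O, |F y - F z| < δ) :
    ∃ g : Z → ℝ, Continuous g ∧ ∀ x, |F x - g x| ≤ δ := by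
  classical
  have hdisj : ∀ k : ℤ, Disjoint (closure {x | F x ≤ (k : ℝ) * δ})
      (closure {x | ((k : ℝ) + 1) * δ ≤ F x}) := by
    intro k
    rw [Set.disjoint_left]
    intro x hxB hxA
    obtain ⟨O, hO, hpair⟩ := hosc x
    obtain ⟨z, hzO, hz⟩ := mem_closure_iff_nhds.1 hxB O hO
    obtain ⟨y, hyO, hy⟩ := mem_closure_iff_nhds.1 hxA O hO
    have h1 := hpair y hyO z hzO
    rw [abs_lt] at h1
    simp only [Set.mem_setOf_eq] at hy hz
    nlinarith [h1.2]
  choose φ hφB hφA hφmem using fun k : ℤ =>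
    exists_continuous_zero_one_of_isClosed isClosed_closure isClosed_closure (hdisj k)
  have hB0 : ∀ (k : ℤ) (x : Z), F x ≤ (k : ℝ) * δ → φ k x = 0 := by
    intro k x h
    simpa using hφB k (subset_closure h)
  have hA1 : ∀ (k : ℤ) (x : Z), ((k : ℝ) + 1) * δ ≤ F x → φ k x = 1 := by
    intro k x h
    simpa using hφA k (subset_closure h)
  have h0 : ∀ (k : ℤ) (x : Z), 0 ≤ φ k x := fun k x => (hφmem k x).1
  have h1 : ∀ (k : ℤ) (x : Z), φ k x ≤ 1 := fun k x => (hφmem k x).2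
  set S : Z → ℕ → ℝ := fun x k => φ (k : ℤ) x with hSdef
  set T : Z → ℕ → ℝ := fun x k => 1 - φ (-(k : ℤ) - 1) x with hTdef
  have hSnn : ∀ x k, 0 ≤ S x k := fun x k => h0 _ _
  have hSle : ∀ x k, S x k ≤ 1 := fun x k => h1 _ _
  have hTnn : ∀ x k, 0 ≤ T x k := fun x k => by simp [hTdef, h1 _ _]
  have hTle : ∀ x k, T x k ≤ 1 := fun x k => by simp [hTdef, h0 _ _]
  have hSzero : ∀ x (k : ℕ), F x ≤ (k : ℝ) * δ → S x k = 0 := by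
    intro x k h
    exact hB0 k x (by push_cast; exact h)
  have hSone : ∀ x (k : ℕ), ((k : ℝ) + 1) * δ ≤ F x → S x k = 1 := by
    intro x k h
    exact hA1 k x (by push_cast; exact h)
  have hTzero : ∀ x (k : ℕ), -((k : ℝ) * δ) ≤ F x → T x k = 0 := by
    intro x k h
    have : φ (-(k : ℤ) - 1) x = 1 := hA1 _ x (by push_cast; nlinarith)
    simp [hTdef, this]
  have hTone : ∀ x (k : ℕ), F x ≤ -(((k : ℝ) + 1) * δ) → T x k = 1 := by
    intro x k h
    have : φ (-(k : ℤ) - 1) x = 0 := hB0 _ x (by push_cast; nlinarith)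
    simp [hTdef, this]
  -- global vanishing
  have hbig : ∀ (c : ℝ) (x : Z), |F x| ≤ c → ∀ k : ℕ, c / δ ≤ (k : ℝ) →
      S x k = 0 ∧ T x k = 0 := by
    intro c x hc k hk
    have hkδ : c ≤ (k : ℝ) * δ := (div_le_iff₀ hδ).1 hk
    have habs := abs_le.1 hc
    exact ⟨hSzero x k (by linarith), hTzero x k (by linarith)⟩
  have hNsupp : ∀ x, ∀ k : ℕ, ⌈|F x| / δ⌉₊ ≤ k → S x k = 0 ∧ T x k = 0 := by
    intro x k hk
    refine hbig |F x| x le_rfl k ?_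
    calc |F x| / δ ≤ (⌈|F x| / δ⌉₊ : ℝ) := Nat.le_ceil _
    _ ≤ (k : ℝ) := by exact_mod_cast hk
  have hSsum : ∀ x, Summable (S x) := by
    intro x
    apply summable_of_ne_finset_zero (s := Finset.range (⌈|F x| / δ⌉₊))
    intro k hk
    exact (hNsupp x k (by simpa [Finset.mem_range, not_lt] using hk)).1
  have hTsum : ∀ x, Summable (T x) := by
    intro x
    apply summable_of_ne_finset_zero (s := Finset.range (⌈|F x| / δ⌉₊))
    intro k hk
    exact (hNsupp x k (by simpa [Finset.mem_range, not_lt] using hk)).2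
  set sF : Z → ℝ := fun x => ∑' k, S x k with hsF
  set tF : Z → ℝ := fun x => ∑' k, T x k with htF
  have hsnn : ∀ x, 0 ≤ sF x := fun x => tsum_nonneg (hSnn x)
  have htnn : ∀ x, 0 ≤ tF x := fun x => tsum_nonneg (hTnn x)
  -- upper bound for sF when F x ≥ 0
  have hs_upper : ∀ x, 0 ≤ F x → sF x ≤ F x / δ + 1 := by
    intro x hx
    set n := ⌈F x / δ⌉₊ with hn
    have hsup : ∀ k ∉ Finset.range n, S x k = 0 := by
      intro k hk
      have hk' : n ≤ k := by simpa [Finset.mem_range, not_lt] using hk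
      apply hSzero
      have : F x / δ ≤ (k : ℝ) := le_trans (Nat.le_ceil _) (by exact_mod_cast hk')
      rw [div_le_iff₀ hδ] at this
      linarith
    have heq : sF x = ∑ k ∈ Finset.range n, S x k := tsum_eq_sum hsup
    rw [heq]
    calc ∑ k ∈ Finset.range n, S x k ≤ ∑ k ∈ Finset.range n, 1 :=
          Finset.sum_le_sum fun i _ => hSle x i
    _ = (n : ℝ) := by simp
    _ ≤ F x / δ + 1 := by
          have := Nat.ceil_lt_add_one (by positivity : 0 ≤ F x / δ)
          linarith
  have hs_zero : ∀ x, F x < 0 → sF x = 0 := by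
    intro x hx
    have heq : sF x = ∑ k ∈ (∅ : Finset ℕ), S x k := tsum_eq_sum (by
      intro k _
      exact hSzero x k (le_trans hx.le (by positivity)))
    simpa using heq
  have hs_lower : ∀ x, F x / δ - 1 ≤ sF x := by
    intro x
    rcases le_or_gt (F x / δ) 1 with h | h
    · linarith [hsnn x]
    · set m := ⌊F x / δ⌋₊ with hm
      have hone : ∀ k ∈ Finset.range m, S x k = 1 := by
        intro k hk
        rw [Finset.mem_range] at hk
        apply hSone
        have h1 : (k : ℝ) + 1 ≤ (m : ℝ) := by exact_mod_cast hk
        have h2 : (m : ℝ) ≤ F x / δ := Nat.floor_le (by linarith)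
        rw [← le_div_iff₀ hδ]
        linarith
      have hsum := Summable.sum_le_tsum (Finset.range m) (fun i _ => hSnn x i) (hSsum x)
      have heq : (m : ℝ) = ∑ k ∈ Finset.range m, S x k := by
        rw [Finset.sum_congr rfl hone]; simp
      have hflo : F x / δ - 1 ≤ (m : ℝ) := by
        have := Nat.lt_floor_add_one (F x / δ)
        push_cast at this ⊢
        linarith
      calc F x / δ - 1 ≤ (m : ℝ) := hflo
      _ = ∑ k ∈ Finset.range m, S x k := heq
      _ ≤ sF x := hsum
  have ht_upper : ∀ x, F x ≤ 0 → tF x ≤ -(F x) / δ + 1 := by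
    intro x hx
    set n := ⌈-(F x) / δ⌉₊ with hn
    have hsup : ∀ k ∉ Finset.range n, T x k = 0 := by
      intro k hk
      have hk' : n ≤ k := by simpa [Finset.mem_range, not_lt] using hk
      apply hTzero
      have h1 : -(F x) / δ ≤ (k : ℝ) := le_trans (Nat.le_ceil _) (by exact_mod_cast hk')
      rw [div_le_iff₀ hδ] at h1
      linarith
    have heq : tF x = ∑ k ∈ Finset.range n, T x k := tsum_eq_sum hsup
    rw [heq]
    calc ∑ k ∈ Finset.range n, T x k ≤ ∑ k ∈ Finset.range n, 1 :=
          Finset.sum_le_sum fun i _ => hTle x i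
    _ = (n : ℝ) := by simp
    _ ≤ -(F x) / δ + 1 := by
          have := Nat.ceil_lt_add_one (div_nonneg (by linarith) hδ.le : (0:ℝ) ≤ -(F x) / δ)
          linarith
  have ht_zero : ∀ x, 0 < F x → tF x = 0 := by
    intro x hx
    have heq : tF x = ∑ k ∈ (∅ : Finset ℕ), T x k := tsum_eq_sum (by
      intro k _
      have hkd : (0:ℝ) ≤ (k:ℝ) * δ := by positivity
      exact hTzero x k (by linarith))
    simpa using heq
  have ht_lower : ∀ x, -(F x) / δ - 1 ≤ tF x := by
    intro x
    rcases le_or_gt (-(F x) / δ) 1 with h | h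
    · linarith [htnn x]
    · set m := ⌊-(F x) / δ⌋₊ with hm
      have hone : ∀ k ∈ Finset.range m, T x k = 1 := by
        intro k hk
        rw [Finset.mem_range] at hk
        apply hTone
        have h1 : (k : ℝ) + 1 ≤ (m : ℝ) := by exact_mod_cast hk
        have h2 : (m : ℝ) ≤ -(F x) / δ := Nat.floor_le (by linarith)
        have h3 : ((k : ℝ) + 1) * δ ≤ -(F x) := by
          rw [← le_div_iff₀ hδ]
          linarith
        linarith
      have hsum := Summable.sum_le_tsum (Finset.range m) (fun i _ => hTnn x i) (hTsum x)
      have heq : (m : ℝ) = ∑ k ∈ Finset.range m, T x k := by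
        rw [Finset.sum_congr rfl hone]; simp
      have hflo : -(F x) / δ - 1 ≤ (m : ℝ) := by
        have := Nat.lt_floor_add_one (-(F x) / δ)
        push_cast at this ⊢
        linarith
      calc -(F x) / δ - 1 ≤ (m : ℝ) := hflo
      _ = ∑ k ∈ Finset.range m, T x k := heq
      _ ≤ tF x := hsum
  refine ⟨fun x => δ * (sF x - tF x), ?_, ?_⟩
  · -- continuity
    rw [continuous_iff_continuousAt]
    intro x₀
    obtain ⟨O, hO, hpair⟩ := hosc x₀
    have hx₀O : x₀ ∈ O := mem_of_mem_nhds hO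
    set K := ⌈(|F x₀| + δ) / δ⌉₊ with hKdef
    have hvan : ∀ y ∈ O, ∀ k : ℕ, K ≤ k → S y k = 0 ∧ T y k = 0 := by
      intro y hy k hk
      have hFy : |F y| ≤ |F x₀| + δ := by
        have h2 := hpair y hy x₀ hx₀O
        calc |F y| = |(F y - F x₀) + F x₀| := by ring_nf
        _ ≤ |F y - F x₀| + |F x₀| := abs_add_le _ _
        _ ≤ |F x₀| + δ := by linarith
      refine hbig (|F x₀| + δ) y hFy k ?_
      calc (|F x₀| + δ) / δ ≤ (K : ℝ) := Nat.le_ceil _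
      _ ≤ (k : ℝ) := by exact_mod_cast hk
    set G : Z → ℝ := fun y =>
      δ * ((∑ k ∈ Finset.range K, φ (k : ℤ) y) -
        ∑ k ∈ Finset.range K, (1 - φ (-(k : ℤ) - 1) y)) with hGdef
    have hGc : Continuous G := by
      apply continuous_const.mul
      apply Continuous.sub
      · exact continuous_finset_sum _ fun i _ => (φ (i : ℤ)).continuous
      · exact continuous_finset_sum _ fun i _ =>
          continuous_const.sub (φ (-(i : ℤ) - 1)).continuous
    have hagree : ∀ y ∈ O, δ * (sF y - tF y) = G y := by
      intro y hy
      have hs : sF y = ∑ k ∈ Finset.range K, S y k :=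
        tsum_eq_sum (fun k hk =>
          (hvan y hy k (by simpa [Finset.mem_range, not_lt] using hk)).1)
      have ht : tF y = ∑ k ∈ Finset.range K, T y k :=
        tsum_eq_sum (fun k hk =>
          (hvan y hy k (by simpa [Finset.mem_range, not_lt] using hk)).2)
      rw [hGdef]
      simp only [hs, ht]
      rfl
    have hev : (fun x => δ * (sF x - tF x)) =ᶠ[𝓝 x₀] G :=
      Filter.eventuallyEq_of_mem hO hagree
    exact (hGc.continuousAt).congr_of_eventuallyEq hev
  · -- bounds
    intro x
    show |F x - δ * (sF x - tF x)| ≤ δ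
    rw [abs_le]
    constructor
    · -- F x - δ(s - t) ≥ -δ, i.e. δ(s - t) ≤ F x + δ
      have hcomb : sF x - tF x ≤ F x / δ + 1 := by
        rcases le_or_gt 0 (F x) with h | h
        · have := hs_upper x h
          linarith [htnn x]
        · have h1 := hs_zero x h
          have h2 := ht_lower x
          rw [neg_div] at h2
          linarith
      have h5 := mul_le_mul_of_nonneg_left hcomb hδ.le
      have hh : δ * (F x / δ + 1) = F x + δ := by field_simp
      linarith [hh ▸ h5]
    · -- F x - δ(s - t) ≤ δ
      have hcomb : F x / δ - 1 ≤ sF x - tF x := by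
        rcases lt_or_ge 0 (F x) with h | h
        · have := hs_lower x
          have h2 := ht_zero x h
          linarith
        · have h1 := ht_upper x h
          rw [neg_div] at h1
          linarith [hsnn x]
      have h5 := mul_le_mul_of_nonneg_left hcomb hδ.le
      have hh : δ * (F x / δ - 1) = F x - δ := by field_simp
      linarith [hh ▸ h5]


theorem stmt_5 {X : Type*} [TopologicalSpace X] [T5Space X] (f : X → ℝ)
    (hstar : ∀ ε : ℝ, 0 < ε → ∀ x ∈ DEps f ε, ContinuousWithinAt f (DEps f ε) x)
    (ε : ℝ) (hε : 0 < ε) :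
    ∃ g : X → ℝ, (∀ x, |f x - g x| ≤ ε) ∧ B1ss g := by
  classical
  set D : Set X := {x | ENNReal.ofReal ε ≤ oscillation f x} with hDdef
  set U := Dᶜ with hUdef
  have hDcompl : U = {x | oscillation f x < ENNReal.ofReal ε} := by
    rw [hUdef]
    ext x
    simp [hDdef, not_le]
  have hUopen : IsOpen U := by
    rw [hDcompl]
    exact isOpen_oscillation_lt f _
  have hosc : ∀ x : U, ∃ O ∈ 𝓝 x, ∀ y ∈ O, ∀ z ∈ O,
      |f ((y : U) : X) - f ((z : U) : X)| < ε := by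
    intro x
    have hx : oscillation f (x : X) < ENNReal.ofReal ε := by
      have h : (x : X) ∈ U := x.2
      exact (Set.ext_iff.1 hDcompl (x : X)).1 h
    have hx' : ⨅ S ∈ (𝓝 (x : X)).map f, EMetric.diam S < ENNReal.ofReal ε := hx
    rw [iInf_lt_iff] at hx'
    obtain ⟨S, hS⟩ := hx'
    rw [iInf_lt_iff] at hS
    obtain ⟨hSmem, hdiam⟩ := hS
    refine ⟨Subtype.val ⁻¹' (f ⁻¹' S), ?_, ?_⟩
    · exact continuous_subtype_val.continuousAt.preimage_mem_nhds hSmem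
    · intro y hy z hz
      have h1 : f ((y : U) : X) ∈ S := hy
      have h2 : f ((z : U) : X) ∈ S := hz
      have h3 := EMetric.edist_le_diam_of_mem h1 h2
      have hlt := lt_of_le_of_lt h3 hdiam
      rw [edist_dist, ENNReal.ofReal_lt_ofReal_iff hε] at hlt
      calc |f ((y : U) : X) - f ((z : U) : X)|
          = dist (f ((y : U) : X)) (f ((z : U) : X)) := (Real.dist_eq _ _).symm
      _ < ε := hlt
  obtain ⟨g₀, hg₀c, hg₀b⟩ := key_approx (fun x : U => f (x : X)) ε hε hosc
  set g : X → ℝ := fun x => if h : x ∈ U then g₀ ⟨x, h⟩ else f x with hg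
  have hgU : ∀ x (h : x ∈ U), g x = g₀ ⟨x, h⟩ := fun x h => dif_pos h
  have hgD : ∀ x, x ∉ U → g x = f x := fun x h => dif_neg h
  have hnotU : ∀ x, x ∈ D → x ∉ U := by
    intro x hxD hxU
    rw [hUdef, Set.mem_compl_iff] at hxU
    exact hxU hxD
  refine ⟨g, ?_, ?_⟩
  · intro x
    by_cases h : x ∈ U
    · rw [hgU x h]
      exact hg₀b ⟨x, h⟩
    · rw [hgD x h]
      simpa using hε.le
  · intro x hx
    have hcont : ∀ y ∈ U, ContinuousAt g y := by
      intro y hy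
      have hres : ContinuousOn g U := by
        rw [continuousOn_iff_continuous_restrict]
        have hrg : U.domRestrict g = g₀ := by
          funext z
          show g z.1 = g₀ z
          rw [hgU z.1 z.2]
        rw [hrg]
        exact hg₀c
      exact hres.continuousAt (hUopen.mem_nhds hy)
    have hDg_sub : {x | ¬ ContinuousAt g x} ⊆ D := by
      intro y hy
      by_contra hyD
      refine hy (hcont y ?_)
      rw [hUdef, Set.mem_compl_iff]
      exact hyD
    have hxD : x ∈ D := hDg_sub hx
    have hxE : x ∈ DEps f (ε / 2) := half_le_oscAt f x ε hxD
    have hsub : D ⊆ DEps f (ε / 2) := fun y hy => half_le_oscAt f y ε hy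
    have hfD : ContinuousWithinAt f D x :=
      (hstar (ε / 2) (by linarith) x hxE).mono hsub
    have hfDg : ContinuousWithinAt f {x | ¬ ContinuousAt g x} x := hfD.mono hDg_sub
    refine hfDg.congr ?_ ?_
    · intro y hy
      exact hgD y (hnotU y (hDg_sub hy))
    · exact hgD x (hnotU x hxD)
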